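/- Let R be a discrete valuation ring and s₁, s₂ ∈ R, not both zero. The cokernel of the R-linear map R → R ⊕ R, r ↦ (r·s₁, r·s₂), is a torsion-free R-module if and only if the ideal generated by s₁ and s₂ is all of R (equivalently, s₁ and s₂ have no common prime factor, i.e. at least one of them is a unit). -/

import Mathlib

/-!
STATEMENT 4.  Let `R` be a discrete valuation ring and `s₁, s₂ ∈ R`, not both
zero.  The cokernel of the `R`-linear map `R → R ⊕ R`, `r ↦ (r·s₁, r·s₂)`, is
a torsion-free `R`-module if and only if the ideal generated by `s₁` and `s₂`
is all of `R` (equivalently, at least one of `s₁, s₂` is a unit).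

Torsion-freeness of a module `M` over the domain `R` (`r • m = 0 → r = 0 ∨
m = 0`) is `NoZeroSMulDivisors R M`.
-/

/-- The `R`-linear map `R → R ⊕ R`, `r ↦ (r·s₁, r·s₂)`. -/
noncomputable def sectionsMap (R : Type*) [CommRing R] (s₁ s₂ : R) :
    R →ₗ[R] R × R :=
  (LinearMap.toSpanSingleton R R s₁).prod (LinearMap.toSpanSingleton R R s₂)

theorem sectionsMap_apply (R : Type*) [CommRing R] (s₁ s₂ r : R) :
    sectionsMap R s₁ s₂ r = (r * s₁, r * s₂) := rfl

theorem dvr_cokernel_torsionFree_iff (R : Type*) [CommRing R] [IsDomain R]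
    [IsDiscreteValuationRing R] (s₁ s₂ : R) (h : ¬(s₁ = 0 ∧ s₂ = 0)) :
    (NoZeroSMulDivisors R ((R × R) ⧸ LinearMap.range (sectionsMap R s₁ s₂)) ↔
      Ideal.span {s₁, s₂} = ⊤) ∧
    (Ideal.span {s₁, s₂} = ⊤ ↔ IsUnit s₁ ∨ IsUnit s₂) := by
  have key2 : Ideal.span {s₁, s₂} = ⊤ ↔ IsUnit s₁ ∨ IsUnit s₂ := by
    constructor
    · intro htop
      by_contra hc
      push_neg at hc
      obtain ⟨h1, h2⟩ := hc
      have m1 : s₁ ∈ IsLocalRing.maximalIdeal R := h1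
      have m2 : s₂ ∈ IsLocalRing.maximalIdeal R := h2
      have : Ideal.span {s₁, s₂} ≤ IsLocalRing.maximalIdeal R := by
        rw [Ideal.span_le]
        intro x hx
        rcases hx with hx | hx
        · simpa [hx] using m1
        · simp at hx; simpa [hx] using m2
      rw [htop] at this
      exact (IsLocalRing.maximalIdeal.isMaximal R).ne_top (top_le_iff.mp this)
    · rintro (hu | hu)
      · exact Ideal.eq_top_of_isUnit_mem _ (Ideal.subset_span (by simp)) hu
      · exact Ideal.eq_top_of_isUnit_mem _ (Ideal.subset_span (by simp)) hu
  refine ⟨?_, key2⟩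
  constructor
  · intro hT
    by_contra htop
    -- both s₁ s₂ are nonunits, hence divisible by a uniformizer π
    have hnu : ¬ IsUnit s₁ ∧ ¬ IsUnit s₂ := by
      constructor <;> intro hu
      · exact htop (key2.mpr (Or.inl hu))
      · exact htop (key2.mpr (Or.inr hu))
    obtain ⟨π, hπ⟩ := IsDiscreteValuationRing.exists_irreducible R
    have hmax : IsLocalRing.maximalIdeal R = Ideal.span {π} :=
      (IsDiscreteValuationRing.irreducible_iff_uniformizer π).mp hπ
    have hd1 : π ∣ s₁ := by
      rw [← Ideal.mem_span_singleton, ← hmax]; exact hnu.1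
    have hd2 : π ∣ s₂ := by
      rw [← Ideal.mem_span_singleton, ← hmax]; exact hnu.2
    obtain ⟨t₁, ht₁⟩ := hd1
    obtain ⟨t₂, ht₂⟩ := hd2
    set N := LinearMap.range (sectionsMap R s₁ s₂)
    have hsmul : π • (Submodule.Quotient.mk (p := N) (t₁, t₂)) = 0 := by
      rw [← Submodule.Quotient.mk_smul, Submodule.Quotient.mk_eq_zero]
      exact ⟨1, by simp [sectionsMap_apply, ht₁, ht₂, Prod.ext_iff, mul_comm]⟩
    rcases eq_zero_or_eq_zero_of_smul_eq_zero hsmul with h0 | h0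
    · exact hπ.ne_zero h0
    · rw [Submodule.Quotient.mk_eq_zero] at h0
      obtain ⟨r, hr⟩ := h0
      rw [sectionsMap_apply, Prod.ext_iff] at hr
      obtain ⟨hr1, hr2⟩ := hr
      dsimp only at hr1 hr2
      have ht : t₁ ≠ 0 ∨ t₂ ≠ 0 := by
        by_contra hcon
        push_neg at hcon
        exact h ⟨by rw [ht₁, hcon.1, mul_zero], by rw [ht₂, hcon.2, mul_zero]⟩
      have hunit : IsUnit π := by
        rcases ht with ht | ht
        · have he : t₁ * (r * π) = t₁ * 1 := by
            linear_combination hr1 - r * ht₁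
          exact IsUnit.of_mul_eq_one (a := π) r (by
            have := mul_left_cancel₀ ht he; linear_combination this)
        · have he : t₂ * (r * π) = t₂ * 1 := by
            linear_combination hr2 - r * ht₂
          exact IsUnit.of_mul_eq_one (a := π) r (by
            have := mul_left_cancel₀ ht he; linear_combination this)
      exact hπ.not_isUnit hunit
  · intro htop
    rw [Ideal.eq_top_iff_one, Ideal.mem_span_pair] at htop
    obtain ⟨a, b, hab⟩ := htop
    constructor
    intro r m hrm
    by_cases hr : r = 0
    · exact Or.inl hr
    · right
      obtain ⟨⟨x, y⟩, rfl⟩ := Submodule.Quotient.mk_surjective _ m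
      rw [← Submodule.Quotient.mk_smul, Submodule.Quotient.mk_eq_zero] at hrm
      obtain ⟨c, hc⟩ := hrm
      rw [sectionsMap_apply, Prod.ext_iff] at hc
      have hx : r * x = c * s₁ := hc.1.symm
      have hy : r * y = c * s₂ := hc.2.symm
      rw [Submodule.Quotient.mk_eq_zero]
      refine ⟨a * x + b * y, ?_⟩
      rw [sectionsMap_apply, Prod.ext_iff]
      constructor
      · apply mul_left_cancel₀ hr
        linear_combination (a * s₁ - 1) * hx + b * s₁ * hy + c * s₁ * hab
      · apply mul_left_cancel₀ hr
        linear_combination a * s₂ * hx + (b * s₂ - 1) * hy + c * s₂ * hab
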